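/- arXiv:1807.05880 — 2 statements merged into one kernel-verified Lean document; each statement's English description precedes it below -/
import Mathlib

section
/- Let $X$ be a reflexive real Banach space and $A : X \to X^*$ a maximal monotone, everywhere-defined, demicontinuous map. Then $A$ is pseudomonotone: if $u_n \rightharpoonup u$ weakly in $X$, $A(u_n) \rightharpoonup u^*$ weakly in $X^*$ and $\limsup_n \langle A(u_n), u_n - u\rangle \le 0$, then for every $y \in X$, $\langle A(u), u - y\rangle \le \liminf_n \langle A(u_n), u_n - y\rangle$. -/
open Filter

theorem maximal_monotone_demicontinuous_is_pseudomonotone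
    {X : Type*} [NormedAddCommGroup X] [NormedSpace ℝ X] [CompleteSpace X]
    (hrefl : Function.Surjective (NormedSpace.inclusionInDoubleDual ℝ X))
    (A : X → (X →L[ℝ] ℝ))
    (hmono : ∀ u v : X, 0 ≤ (A u - A v) (u - v))
    (hmax : ∀ (u : X) (w : X →L[ℝ] ℝ), (∀ v : X, 0 ≤ (w - A v) (u - v)) → w = A u)
    (hdemi : ∀ (f : ℕ → X) (x : X), Tendsto f atTop (nhds x) →
      ∀ y : X, Tendsto (fun n => A (f n) y) atTop (nhds (A x y)))
    (u : ℕ → X) (u₀ : X)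
    (huw : ∀ f : X →L[ℝ] ℝ, Tendsto (fun n => f (u n)) atTop (nhds (f u₀)))
    (ustar : X →L[ℝ] ℝ)
    (hAw : ∀ y : X, Tendsto (fun n => A (u n) y) atTop (nhds (ustar y)))
    (hlimsup : Filter.limsup (fun n => A (u n) (u n - u₀)) atTop ≤ 0) :
    ∀ y : X, A u₀ (u₀ - y) ≤ Filter.liminf (fun n => A (u n) (u n - y)) atTop := by
  -- the sequence in question
  set f : ℕ → ℝ := fun n => A (u n) (u n - u₀) with hf
  -- uniform bound on the operators via Banach–Steinhaus
  obtain ⟨M₁, hM₁⟩ : ∃ C, ∀ n, ‖A (u n)‖ ≤ C := by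
    apply banach_steinhaus (g := fun n => A (u n))
    intro x
    obtain ⟨C, hC⟩ := (hAw x).norm.bddAbove_range
    exact ⟨C, fun n => hC ⟨n, rfl⟩⟩
  -- uniform bound on the sequence via Banach–Steinhaus in the dual
  obtain ⟨M₂, hM₂⟩ : ∃ C, ∀ n, ‖u n‖ ≤ C := by
    obtain ⟨C, hC⟩ : ∃ C, ∀ n, ‖NormedSpace.inclusionInDoubleDual ℝ X (u n)‖ ≤ C := by
      apply banach_steinhaus (g := fun n => NormedSpace.inclusionInDoubleDual ℝ X (u n))
      intro g
      obtain ⟨C, hC⟩ := (huw g).norm.bddAbove_range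
      exact ⟨C, fun n => hC ⟨n, rfl⟩⟩
    refine ⟨C, fun n => ?_⟩
    have h := (NormedSpace.inclusionInDoubleDualLi ℝ (E := X)).norm_map (u n)
    calc ‖u n‖ = ‖NormedSpace.inclusionInDoubleDual ℝ X (u n)‖ := h.symm
      _ ≤ C := hC n
  -- bound on f
  have hfb : ∀ n, |f n| ≤ M₁ * (M₂ + ‖u₀‖) := by
    intro n
    calc |f n| = ‖A (u n) (u n - u₀)‖ := rfl
      _ ≤ ‖A (u n)‖ * ‖u n - u₀‖ := (A (u n)).le_opNorm _
      _ ≤ M₁ * (M₂ + ‖u₀‖) := by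
          apply mul_le_mul (hM₁ n) _ (norm_nonneg _) ((norm_nonneg _).trans (hM₁ n))
          calc ‖u n - u₀‖ ≤ ‖u n‖ + ‖u₀‖ := norm_sub_le _ _
            _ ≤ M₂ + ‖u₀‖ := by linarith [hM₂ n]
  have hfble : IsBoundedUnder (· ≤ ·) atTop f :=
    isBoundedUnder_of ⟨M₁ * (M₂ + ‖u₀‖), fun n => (le_abs_self _).trans (hfb n)⟩
  have hfbge : IsBoundedUnder (· ≥ ·) atTop f :=
    isBoundedUnder_of ⟨-(M₁ * (M₂ + ‖u₀‖)), fun n => neg_le_of_abs_le (hfb n)⟩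
  -- lower comparison sequence tending to 0
  have hg : Tendsto (fun n => A u₀ (u n) - A u₀ u₀) atTop (nhds 0) := by
    have := (huw (A u₀)).sub_const (A u₀ u₀)
    simpa using this
  have hgf : ∀ n, A u₀ (u n) - A u₀ u₀ ≤ f n := by
    intro n
    have h := hmono (u n) u₀
    simp only [ContinuousLinearMap.sub_apply, map_sub, hf] at h ⊢
    linarith
  -- liminf f ≥ 0
  have hliminf : (0 : ℝ) ≤ atTop.liminf f := by
    have h1 : atTop.liminf (fun n => A u₀ (u n) - A u₀ u₀) ≤ atTop.liminf f :=
      liminf_le_liminf (Eventually.of_forall hgf)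
        hg.isBoundedUnder_ge (hfble.isCoboundedUnder_ge)
    rwa [hg.liminf_eq] at h1
  -- f tends to 0
  have hf0 : Tendsto f atTop (nhds 0) :=
    tendsto_of_le_liminf_of_limsup_le hliminf hlimsup hfble hfbge
  -- maximality argument: ustar = A u₀
  have key : ∀ v : X, 0 ≤ (ustar - A v) (u₀ - v) := by
    intro v
    have hAv : Tendsto (fun n => A v (u n) - A v v) atTop (nhds (A v u₀ - A v v)) :=
      (huw (A v)).sub_const (A v v)
    have hseq : Tendsto (fun n => f n + A (u n) (u₀ - v) - (A v (u n) - A v v)) atTop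
        (nhds (0 + ustar (u₀ - v) - (A v u₀ - A v v))) :=
      ((hf0.add (hAw (u₀ - v))).sub hAv)
    have hnn : ∀ n, 0 ≤ f n + A (u n) (u₀ - v) - (A v (u n) - A v v) := by
      intro n
      have h := hmono (u n) v
      simp only [ContinuousLinearMap.sub_apply, map_sub, hf] at h ⊢
      linarith
    have h0 := ge_of_tendsto' hseq hnn
    simp only [ContinuousLinearMap.sub_apply, map_sub] at h0 ⊢
    linarith
  have hust : ustar = A u₀ := hmax u₀ ustar key
  -- conclusion
  intro y
  have hconv : Tendsto (fun n => A (u n) (u n - y)) atTop (nhds (A u₀ (u₀ - y))) := by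
    have h1 : Tendsto (fun n => f n + A (u n) (u₀ - y)) atTop (nhds (0 + ustar (u₀ - y))) :=
      hf0.add (hAw (u₀ - y))
    have heq : (fun n => A (u n) (u n - y)) = fun n => f n + A (u n) (u₀ - y) := by
      funext n
      simp only [map_sub, hf]
      ring
    rw [heq, ← hust]
    simpa using h1
  rw [hconv.liminf_eq]
end

section
/- Let $\Omega \subseteq \mathbb{R}^N$ be a bounded domain and $a : \mathbb{R} \to \mathbb{R}$ satisfy $|a(x) - a(y)| \le k|x-y|$ and $0 < c_1 \le a(x) \le c_2$ for all $x, y \in \mathbb{R}$. Define $\hat{a} : H^1(\Omega) \to H^1(\Omega)^*$ by $\langle \hat{a}(u), h\rangle = \int_\Omega a(u) (Du, Dh)_{\mathbb{R}^N}\, dz$. If $u_n \rightharpoonup u$ weakly in $H^1(\Omega)$ (hence $u_n \to u$ in $L^2(\Omega)$) and $\limsup_n \langle \hat{a}(u_n), u_n - u\rangle \le 0$, then $u_n \to u$ strongly in $H^1(\Omega)$. -/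
open Filter MeasureTheory

private theorem aux_normsq {α E : Type*} [MeasurableSpace α] {μ : Measure α} [NormedAddCommGroup E]
    [InnerProductSpace ℝ E] (f : α → E) (hf : MemLp f 2 μ) :
    ‖hf.toLp f‖ ^ 2 = ∫ x, ‖f x‖ ^ 2 ∂μ := by
  rw [← real_inner_self_eq_norm_sq, L2.inner_def]
  refine integral_congr_ae ?_
  filter_upwards [hf.coeFn_toLp] with x hx
  rw [hx, real_inner_self_eq_norm_sq]

private theorem aux_normle {α E F : Type*} [MeasurableSpace α] {μ : Measure α}
    [NormedAddCommGroup E]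
    [InnerProductSpace ℝ E] [NormedAddCommGroup F] [InnerProductSpace ℝ F]
    (f : α → E) (hf : MemLp f 2 μ) (g : α → F) (hg : MemLp g 2 μ) {c : ℝ} (hc : 0 ≤ c)
    (h : ∀ᵐ x ∂μ, ‖f x‖ ≤ c * ‖g x‖) :
    ‖hf.toLp f‖ ≤ c * ‖hg.toLp g‖ := by
  have h1 : ‖hf.toLp f‖ ^ 2 ≤ (c * ‖hg.toLp g‖) ^ 2 := by
    rw [aux_normsq f hf, mul_pow, aux_normsq g hg, ← MeasureTheory.integral_const_mul]
    refine integral_mono_ae ?_ ?_ ?_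
    · have := L2.integrable_inner (𝕜 := ℝ) (hf.toLp f) (hf.toLp f)
      refine this.congr ?_
      filter_upwards [hf.coeFn_toLp] with x hx
      rw [hx, real_inner_self_eq_norm_sq]
    · have := (L2.integrable_inner (𝕜 := ℝ) (hg.toLp g) (hg.toLp g)).const_mul (c ^ 2)
      refine this.congr ?_
      filter_upwards [hg.coeFn_toLp] with x hx
      rw [hx, real_inner_self_eq_norm_sq]
    · filter_upwards [h] with x hx
      calc ‖f x‖ ^ 2 ≤ (c * ‖g x‖) ^ 2 := pow_le_pow_left₀ (norm_nonneg _) hx 2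
        _ = c ^ 2 * ‖g x‖ ^ 2 := by ring
  have h2 : 0 ≤ c * ‖hg.toLp g‖ := mul_nonneg hc (norm_nonneg _)
  nlinarith [norm_nonneg (hf.toLp f)]

set_option maxHeartbeats 1000000 in
theorem gradient_strong_convergence_from_limsup_condition
    {N : ℕ} (Ω : Set (EuclideanSpace ℝ (Fin N)))
    (hΩopen : IsOpen Ω) (hΩbd : Bornology.IsBounded Ω) (hΩne : Ω.Nonempty)
    (μ : Measure (EuclideanSpace ℝ (Fin N))) (hμ : μ = volume.restrict Ω)
    (a : ℝ → ℝ) (k c₁ c₂ : ℝ) (hk : 0 < k) (hc₁ : 0 < c₁)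
    (halip : ∀ x y : ℝ, |a x - a y| ≤ k * |x - y|)
    (habd : ∀ x : ℝ, c₁ ≤ a x ∧ a x ≤ c₂)
    (u : ℕ → EuclideanSpace ℝ (Fin N) → ℝ) (u₀ : EuclideanSpace ℝ (Fin N) → ℝ)
    (Du : ℕ → EuclideanSpace ℝ (Fin N) → EuclideanSpace ℝ (Fin N))
    (Du₀ : EuclideanSpace ℝ (Fin N) → EuclideanSpace ℝ (Fin N))
    (hu2 : ∀ n, MemLp (u n) 2 μ) (hu02 : MemLp u₀ 2 μ)
    (hDu2 : ∀ n, MemLp (Du n) 2 μ) (hDu02 : MemLp Du₀ 2 μ)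
    -- weak convergence u_n ⇀ u₀ in H¹(Ω):
    (huweak : ∀ v : EuclideanSpace ℝ (Fin N) → ℝ, MemLp v 2 μ →
      Tendsto (fun n => ∫ x, u n x * v x ∂μ) atTop (nhds (∫ x, u₀ x * v x ∂μ)))
    (hDuweak : ∀ w : EuclideanSpace ℝ (Fin N) → EuclideanSpace ℝ (Fin N), MemLp w 2 μ →
      Tendsto (fun n => ∫ x, (inner ℝ (Du n x) (w x) : ℝ) ∂μ) atTop
        (nhds (∫ x, (inner ℝ (Du₀ x) (w x) : ℝ) ∂μ)))
    -- hence u_n → u₀ strongly in L²(Ω):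
    (hustrong : Tendsto (fun n => ∫ x, |u n x - u₀ x| ^ 2 ∂μ) atTop (nhds 0))
    -- limsup ⟨â(u_n), u_n - u₀⟩ ≤ 0:
    (hlimsup : Filter.limsup
      (fun n => ∫ x, a (u n x) * (inner ℝ (Du n x) (Du n x - Du₀ x) : ℝ) ∂μ) atTop ≤ 0) :
    Tendsto (fun n => ∫ x, ‖Du n x - Du₀ x‖ ^ 2 ∂μ) atTop (nhds 0) ∧
    Tendsto (fun n => ∫ x, |u n x - u₀ x| ^ 2 ∂μ) atTop (nhds 0) := by
  -- basic facts about a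
  have haC : Continuous a := by
    have : LipschitzWith k.toNNReal a := by
      apply LipschitzWith.of_dist_le_mul
      intro x y
      rw [Real.dist_eq, Real.dist_eq, Real.coe_toNNReal k hk.le]
      exact halip x y
    exact this.continuous
  have hc12 : c₁ ≤ c₂ := le_trans (habd 0).1 (habd 0).2
  have hc₂ : 0 < c₂ := lt_of_lt_of_le hc₁ hc12
  have haabs : ∀ s : ℝ, |a s| ≤ c₂ := fun s =>
    abs_le.mpr ⟨by linarith [(habd s).1], (habd s).2⟩
  have hadiff : ∀ s t : ℝ, |a s - a t| ≤ c₂ - c₁ := fun s t =>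
    abs_le.mpr ⟨by linarith [(habd s).1, (habd t).2], by linarith [(habd s).2, (habd t).1]⟩
  -- measurability
  have ham : ∀ n, AEStronglyMeasurable (fun x => a (u n x)) μ := fun n =>
    haC.comp_aestronglyMeasurable (hu2 n).aestronglyMeasurable
  have ham0 : AEStronglyMeasurable (fun x => a (u₀ x)) μ :=
    haC.comp_aestronglyMeasurable hu02.aestronglyMeasurable
  -- MemLp facts
  have hfn2 : ∀ n, MemLp (fun x => Du n x - Du₀ x) 2 μ := fun n => (hDu2 n).sub hDu02
  have hT2 : ∀ n, MemLp (fun x => a (u n x) • (Du n x - Du₀ x)) 2 μ := by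
    intro n
    have hφ : MemLp (fun x => a (u n x)) ⊤ μ :=
      memLp_top_of_bound (ham n) c₂ (Eventually.of_forall fun x => by
        simpa [Real.norm_eq_abs] using haabs (u n x))
    exact (hfn2 n).smul hφ
  have hQ2 : ∀ n, MemLp (fun x => (a (u n x) - a (u₀ x)) • Du₀ x) 2 μ := by
    intro n
    have hφ : MemLp (fun x => a (u n x) - a (u₀ x)) ⊤ μ :=
      memLp_top_of_bound ((ham n).sub ham0) (c₂ - c₁) (Eventually.of_forall fun x => by
        simpa [Real.norm_eq_abs] using hadiff (u n x) (u₀ x))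
    exact hDu02.smul hφ
  have hW2 : MemLp (fun x => a (u₀ x) • Du₀ x) 2 μ := by
    have hφ : MemLp (fun x => a (u₀ x)) ⊤ μ :=
      memLp_top_of_bound ham0 c₂ (Eventually.of_forall fun x => by
        simpa [Real.norm_eq_abs] using haabs (u₀ x))
    exact hDu02.smul hφ
  -- Lp elements
  set G : ℕ → Lp (EuclideanSpace ℝ (Fin N)) 2 μ := fun n => (hDu2 n).toLp (Du n) with hGdef
  set G₀ : Lp (EuclideanSpace ℝ (Fin N)) 2 μ := hDu02.toLp Du₀ with hG0def
  set F : ℕ → Lp (EuclideanSpace ℝ (Fin N)) 2 μ := fun n => G n - G₀ with hFdef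
  set T : ℕ → Lp (EuclideanSpace ℝ (Fin N)) 2 μ := fun n => (hT2 n).toLp _ with hTdef
  set Q : ℕ → Lp (EuclideanSpace ℝ (Fin N)) 2 μ := fun n => (hQ2 n).toLp _ with hQdef
  set Wl : Lp (EuclideanSpace ℝ (Fin N)) 2 μ := hW2.toLp _ with hWdef
  have hFtoLp : ∀ n, F n = (hfn2 n).toLp _ := fun n => ((hDu2 n).toLp_sub hDu02).symm
  have hFcoe : ∀ n, (F n : EuclideanSpace ℝ (Fin N) → EuclideanSpace ℝ (Fin N))
      =ᵐ[μ] fun x => Du n x - Du₀ x := fun n => by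
    rw [hFtoLp n]; exact (hfn2 n).coeFn_toLp
  -- weak convergence in Lp language
  have hweakL : ∀ w : Lp (EuclideanSpace ℝ (Fin N)) 2 μ,
      Tendsto (fun n => (inner ℝ (G n) w : ℝ)) atTop (nhds (inner ℝ G₀ w)) := by
    intro w
    have h1 : ∀ n, (inner ℝ (G n) w : ℝ) = ∫ x, (inner ℝ (Du n x) (w x) : ℝ) ∂μ := by
      intro n
      rw [L2.inner_def]
      refine integral_congr_ae ?_
      filter_upwards [(hDu2 n).coeFn_toLp] with x hx
      rw [hx]
    have h0 : (inner ℝ G₀ w : ℝ) = ∫ x, (inner ℝ (Du₀ x) (w x) : ℝ) ∂μ := by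
      rw [L2.inner_def]
      refine integral_congr_ae ?_
      filter_upwards [hDu02.coeFn_toLp] with x hx
      rw [hx]
    rw [h0]
    simp only [h1]
    exact hDuweak w (Lp.memLp w)
  -- Banach–Steinhaus : the G n are bounded
  obtain ⟨C, hC⟩ : ∃ C, ∀ n, ‖G n‖ ≤ C := by
    obtain ⟨C, hC⟩ := banach_steinhaus (g := fun n => innerSL ℝ (G n)) (fun w => by
      obtain ⟨B, hB⟩ := (hweakL w).norm.bddAbove_range
      exact ⟨B, fun n => by simpa using hB (Set.mem_range_self n)⟩)
    exact ⟨C, fun n => by simpa [innerSL_apply_norm] using hC n⟩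
  -- the decomposition of A
  set A : ℕ → ℝ :=
    fun n => ∫ x, a (u n x) * (inner ℝ (Du n x) (Du n x - Du₀ x) : ℝ) ∂μ with hAdef
  have hj1 : ∀ n, Integrable
      (fun x => a (u n x) * (inner ℝ (Du n x - Du₀ x) (Du n x - Du₀ x) : ℝ)) μ := by
    intro n
    refine (L2.integrable_inner (𝕜 := ℝ) (T n) (F n)).congr ?_
    filter_upwards [(hT2 n).coeFn_toLp, hFcoe n] with x h1 h2
    rw [h1, h2, real_inner_smul_left]
  have hj2 : ∀ n, Integrable
      (fun x => (a (u n x) - a (u₀ x)) * (inner ℝ (Du₀ x) (Du n x - Du₀ x) : ℝ)) μ := by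
    intro n
    refine (L2.integrable_inner (𝕜 := ℝ) (Q n) (F n)).congr ?_
    filter_upwards [(hQ2 n).coeFn_toLp, hFcoe n] with x h1 h2
    rw [h1, h2, real_inner_smul_left]
  have hj3 : ∀ n, Integrable
      (fun x => a (u₀ x) * (inner ℝ (Du₀ x) (Du n x - Du₀ x) : ℝ)) μ := by
    intro n
    refine (L2.integrable_inner (𝕜 := ℝ) Wl (F n)).congr ?_
    filter_upwards [hW2.coeFn_toLp, hFcoe n] with x h1 h2
    rw [h1, h2, real_inner_smul_left]
  have hi1 : ∀ n, (inner ℝ (T n) (F n) : ℝ)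
      = ∫ x, a (u n x) * (inner ℝ (Du n x - Du₀ x) (Du n x - Du₀ x) : ℝ) ∂μ := by
    intro n
    rw [L2.inner_def]
    refine integral_congr_ae ?_
    filter_upwards [(hT2 n).coeFn_toLp, hFcoe n] with x h1 h2
    rw [h1, h2, real_inner_smul_left]
  have hi2 : ∀ n, (inner ℝ (Q n) (F n) : ℝ)
      = ∫ x, (a (u n x) - a (u₀ x)) * (inner ℝ (Du₀ x) (Du n x - Du₀ x) : ℝ) ∂μ := by
    intro n
    rw [L2.inner_def]
    refine integral_congr_ae ?_
    filter_upwards [(hQ2 n).coeFn_toLp, hFcoe n] with x h1 h2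
    rw [h1, h2, real_inner_smul_left]
  have hi3 : ∀ n, (inner ℝ Wl (F n) : ℝ)
      = ∫ x, a (u₀ x) * (inner ℝ (Du₀ x) (Du n x - Du₀ x) : ℝ) ∂μ := by
    intro n
    rw [L2.inner_def]
    refine integral_congr_ae ?_
    filter_upwards [hW2.coeFn_toLp, hFcoe n] with x h1 h2
    rw [h1, h2, real_inner_smul_left]
  have hAeq : ∀ n, A n = (inner ℝ (T n) (F n) : ℝ) + inner ℝ (Q n) (F n) + inner ℝ Wl (F n) := by
    intro n
    have hj12 : Integrable (fun x => a (u n x) * (inner ℝ (Du n x - Du₀ x) (Du n x - Du₀ x) : ℝ)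
        + (a (u n x) - a (u₀ x)) * (inner ℝ (Du₀ x) (Du n x - Du₀ x) : ℝ)) μ :=
      (hj1 n).add (hj2 n)
    rw [hi1 n, hi2 n, hi3 n, ← integral_add (hj1 n) (hj2 n), ← integral_add hj12 (hj3 n)]
    refine integral_congr_ae (Eventually.of_forall fun x => ?_)
    simp only [inner_sub_left, inner_sub_right]
    rw [real_inner_comm (Du₀ x) (Du n x)]
    ring
  -- lower bound
  have hlow : ∀ n, c₁ * ‖F n‖ ^ 2 ≤ (inner ℝ (T n) (F n) : ℝ) := by
    intro n
    rw [← real_inner_self_eq_norm_sq, L2.inner_def, L2.inner_def,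
      ← MeasureTheory.integral_const_mul]
    refine integral_mono_ae ((L2.integrable_inner (𝕜 := ℝ) (F n) (F n)).const_mul c₁)
      (L2.integrable_inner (𝕜 := ℝ) (T n) (F n)) ?_
    filter_upwards [(hT2 n).coeFn_toLp, hFcoe n] with x h1 h2
    rw [h1, h2, real_inner_smul_left]
    exact mul_le_mul_of_nonneg_right (habd (u n x)).1 real_inner_self_nonneg
  -- norm bounds
  have hQle : ∀ n, ‖Q n‖ ≤ (c₂ - c₁) * ‖G₀‖ := by
    intro n
    refine aux_normle _ (hQ2 n) _ hDu02 (by linarith) ?_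
    refine Eventually.of_forall fun x => ?_
    rw [norm_smul, Real.norm_eq_abs]
    exact mul_le_mul_of_nonneg_right (hadiff _ _) (norm_nonneg _)
  have hTle : ∀ n, ‖T n‖ ≤ c₂ * ‖F n‖ := by
    intro n
    rw [hFtoLp n]
    refine aux_normle _ (hT2 n) _ (hfn2 n) hc₂.le ?_
    refine Eventually.of_forall fun x => ?_
    rw [norm_smul, Real.norm_eq_abs]
    exact mul_le_mul_of_nonneg_right (haabs _) (norm_nonneg _)
  -- W-term tends to 0
  have hWn : Tendsto (fun n => (inner ℝ Wl (F n) : ℝ)) atTop (nhds 0) := by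
    have h1 : ∀ n, (inner ℝ Wl (F n) : ℝ) = (inner ℝ (G n) Wl : ℝ) - inner ℝ G₀ Wl := by
      intro n
      rw [real_inner_comm]
      simp only [hFdef, inner_sub_left]
    simp only [h1]
    have h2 := (hweakL Wl).sub_const ((inner ℝ G₀ Wl : ℝ))
    rw [sub_self] at h2
    exact h2
  -- Q-term tends to 0
  have hDu0sq : Integrable (fun x => ‖Du₀ x‖ ^ 2) μ := by
    refine (L2.integrable_inner (𝕜 := ℝ) G₀ G₀).congr ?_
    filter_upwards [hDu02.coeFn_toLp] with x hx
    rw [hx, real_inner_self_eq_norm_sq]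
  have hUm : TendstoInMeasure μ u atTop u₀ := by
    refine tendstoInMeasure_of_tendsto_eLpNorm (p := 2) two_ne_zero
      (fun n => (hu2 n).aestronglyMeasurable) hu02.aestronglyMeasurable ?_
    have hmem : ∀ n, MemLp (u n - u₀) 2 μ := fun n => (hu2 n).sub hu02
    rw [← ENNReal.tendsto_toReal_iff (fun n => (hmem n).eLpNorm_ne_top) ENNReal.zero_ne_top]
    have key : ∀ n, (eLpNorm (u n - u₀) 2 μ).toReal
        = Real.sqrt (∫ x, |u n x - u₀ x| ^ 2 ∂μ) := by
      intro n
      rw [← Lp.norm_toLp _ (hmem n)]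
      have h2 : ‖(hmem n).toLp _‖ ^ 2 = ∫ x, |u n x - u₀ x| ^ 2 ∂μ := by
        rw [aux_normsq _ (hmem n)]
        refine integral_congr_ae (Eventually.of_forall fun x => ?_)
        simp [Real.norm_eq_abs, Pi.sub_apply]
      rw [← h2, Real.sqrt_sq (norm_nonneg _)]
    simp only [key, ENNReal.toReal_zero]
    simpa using hustrong.sqrt
  have hq2 : Tendsto (fun n => ∫ x, ‖(a (u n x) - a (u₀ x)) • Du₀ x‖ ^ 2 ∂μ) atTop (nhds 0) := by
    refine tendsto_of_subseq_tendsto fun ns hns => ?_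
    have hm : TendstoInMeasure μ (fun i => u (ns i)) atTop u₀ := fun ε hε => (hUm ε hε).comp hns
    obtain ⟨ms, _hms, hae⟩ := hm.exists_seq_tendsto_ae
    refine ⟨ms, ?_⟩
    have hbd : ∀ j x, ‖(a (u j x) - a (u₀ x)) • Du₀ x‖ ^ 2 ≤ (c₂ - c₁) ^ 2 * ‖Du₀ x‖ ^ 2 := by
      intro j x
      rw [norm_smul, Real.norm_eq_abs, mul_pow]
      exact mul_le_mul_of_nonneg_right
        (pow_le_pow_left₀ (abs_nonneg _) (hadiff _ _) 2) (by positivity)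
    have h0 : Tendsto (fun i => ∫ x, ‖(a (u (ns (ms i)) x) - a (u₀ x)) • Du₀ x‖ ^ 2 ∂μ) atTop
        (nhds (∫ _x, (0 : ℝ) ∂μ)) := by
      refine tendsto_integral_of_dominated_convergence
        (fun x => (c₂ - c₁) ^ 2 * ‖Du₀ x‖ ^ 2) ?_ ?_ ?_ ?_
      · intro i
        exact (continuous_pow 2).comp_aestronglyMeasurable
          (AEStronglyMeasurable.norm (((ham (ns (ms i))).sub ham0).smul
            hDu02.aestronglyMeasurable))
      · exact hDu0sq.const_mul _
      · intro i
        refine Eventually.of_forall fun x => ?_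
        rw [Real.norm_eq_abs, abs_of_nonneg (sq_nonneg _)]
        exact hbd _ x
      · filter_upwards [hae] with x hx
        have h1 : Tendsto (fun i => a (u (ns (ms i)) x)) atTop (nhds (a (u₀ x))) :=
          (haC.tendsto _).comp hx
        have h2 : Tendsto (fun i => ‖(a (u (ns (ms i)) x) - a (u₀ x)) • Du₀ x‖ ^ 2) atTop
            (nhds (‖(a (u₀ x) - a (u₀ x)) • Du₀ x‖ ^ 2)) :=
          (((h1.sub tendsto_const_nhds).smul tendsto_const_nhds).norm.pow 2)
        simpa using h2
    simpa using h0
  have hQn : Tendsto (fun n => ‖Q n‖) atTop (nhds 0) := by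
    have h1 : ∀ n, ‖Q n‖ = Real.sqrt (∫ x, ‖(a (u n x) - a (u₀ x)) • Du₀ x‖ ^ 2 ∂μ) := by
      intro n
      rw [← aux_normsq _ (hQ2 n), Real.sqrt_sq (norm_nonneg _)]
    simp only [h1]
    simpa using hq2.sqrt
  -- uniform bound on F
  have hFle : ∀ n, ‖F n‖ ≤ C + ‖G₀‖ := fun n =>
    (norm_sub_le _ _).trans (by linarith [hC n])
  set S : ℝ := C + ‖G₀‖ with hSdef
  have hS0 : 0 ≤ S := le_trans (norm_nonneg (F 0)) (hFle 0)
  -- A is bounded above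
  have hKbd : Filter.IsBoundedUnder (· ≤ ·) atTop A := by
    refine isBoundedUnder_of ⟨(c₂ * S + (c₂ - c₁) * ‖G₀‖ + ‖Wl‖) * S, fun n => ?_⟩
    rw [hAeq n]
    have h1 : (inner ℝ (T n) (F n) : ℝ) ≤ ‖T n‖ * ‖F n‖ := real_inner_le_norm _ _
    have h2 : (inner ℝ (Q n) (F n) : ℝ) ≤ ‖Q n‖ * ‖F n‖ := real_inner_le_norm _ _
    have h3 : (inner ℝ Wl (F n) : ℝ) ≤ ‖Wl‖ * ‖F n‖ := real_inner_le_norm _ _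
    have hT' : ‖T n‖ ≤ c₂ * S := (hTle n).trans (mul_le_mul_of_nonneg_left (hFle n) hc₂.le)
    have hnn : (0 : ℝ) ≤ c₂ * S + (c₂ - c₁) * ‖G₀‖ + ‖Wl‖ := by
      have h4 := norm_nonneg Wl
      have h5 := norm_nonneg G₀
      nlinarith [hS0, hc₂.le, hc12]
    calc (inner ℝ (T n) (F n) : ℝ) + inner ℝ (Q n) (F n) + inner ℝ Wl (F n)
        ≤ (‖T n‖ + ‖Q n‖ + ‖Wl‖) * ‖F n‖ := by
          rw [add_mul, add_mul]
          exact add_le_add (add_le_add h1 h2) h3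
      _ ≤ (c₂ * S + (c₂ - c₁) * ‖G₀‖ + ‖Wl‖) * S := by
          refine mul_le_mul ?_ (hFle n) (norm_nonneg _) hnn
          exact add_le_add (add_le_add hT' (hQle n)) le_rfl
  -- main inequality
  have hmain : ∀ n, ‖F n‖ ^ 2 ≤ (A n + ‖Q n‖ * S + |(inner ℝ Wl (F n) : ℝ)|) / c₁ := by
    intro n
    rw [le_div_iff₀ hc₁]
    have h1 := hlow n
    have h2 : (inner ℝ (T n) (F n) : ℝ) = A n - inner ℝ (Q n) (F n) - inner ℝ Wl (F n) := by
      rw [hAeq n]; ring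
    have h3 : -(inner ℝ (Q n) (F n) : ℝ) ≤ ‖Q n‖ * ‖F n‖ :=
      (neg_le_abs _).trans (abs_real_inner_le_norm _ _)
    have h4 : ‖Q n‖ * ‖F n‖ ≤ ‖Q n‖ * S := mul_le_mul_of_nonneg_left (hFle n) (norm_nonneg _)
    have h5 : -(inner ℝ Wl (F n) : ℝ) ≤ |(inner ℝ Wl (F n) : ℝ)| := neg_le_abs _
    nlinarith
  -- conclusion
  have hsq : Tendsto (fun n => ‖F n‖ ^ 2) atTop (nhds 0) := by
    refine tendsto_order.2 ⟨fun b hb => Eventually.of_forall fun n =>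
      lt_of_lt_of_le hb (sq_nonneg _), fun b hb => ?_⟩
    have hb3 : (0 : ℝ) < c₁ * b / 3 := by positivity
    have hA : ∀ᶠ n in atTop, A n < c₁ * b / 3 :=
      eventually_lt_of_limsup_lt (lt_of_le_of_lt hlimsup hb3) hKbd
    have hQ' : ∀ᶠ n in atTop, ‖Q n‖ * S < c₁ * b / 3 := by
      have : Tendsto (fun n => ‖Q n‖ * S) atTop (nhds 0) := by
        simpa using hQn.mul_const S
      exact this.eventually_lt_const hb3
    have hW' : ∀ᶠ n in atTop, |(inner ℝ Wl (F n) : ℝ)| < c₁ * b / 3 := by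
      have : Tendsto (fun n => |(inner ℝ Wl (F n) : ℝ)|) atTop (nhds 0) := by
        simpa using hWn.abs
      exact this.eventually_lt_const hb3
    filter_upwards [hA, hQ', hW'] with n h1 h2 h3
    have h4 := hmain n
    have h5 : (A n + ‖Q n‖ * S + |(inner ℝ Wl (F n) : ℝ)|) / c₁ < b := by
      rw [div_lt_iff₀ hc₁]
      calc A n + ‖Q n‖ * S + |(inner ℝ Wl (F n) : ℝ)|
          < c₁ * b / 3 + c₁ * b / 3 + c₁ * b / 3 :=
            add_lt_add (add_lt_add h1 h2) h3
        _ = b * c₁ := by ring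
    linarith
  constructor
  · have hgoal : (fun n => ∫ x, ‖Du n x - Du₀ x‖ ^ 2 ∂μ) = fun n => ‖F n‖ ^ 2 := by
      funext n
      rw [hFtoLp n, aux_normsq _ (hfn2 n)]
    rw [hgoal]
    exact hsq
  · exact hustrong
end
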